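/- Let K be a Polish locally compact group acting freely and in a Borel way on a standard Borel space X, preserving a Borel probability measure μ, and let λ be Lebesgue measure on [0,1]. Define an action of the semidirect product S_∞ ⋉ K^ℕ on X^ℕ × [0,1]^ℕ by (σ,(g_n))·((x_n),(y_n)) = ((g_n·x_{σ⁻¹(n)}), (y_{σ⁻¹(n)})). Then this is a Borel action that preserves the product measure μ^ℕ × λ^ℕ, and its free part has full measure. -/

import Mathlib

open MeasureTheory
open scoped ENNReal

section Aux

lemma ext_cylinders {α : Type*} [MeasurableSpace α] {ν ν' : Measure (ℕ → α)}
    [IsProbabilityMeasure ν] [IsProbabilityMeasure ν']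
    (h : ∀ (s : Finset ℕ) (A : ℕ → Set α), (∀ i, MeasurableSet (A i)) →
      ν {x : ℕ → α | ∀ i ∈ s, x i ∈ A i} = ν' {x : ℕ → α | ∀ i ∈ s, x i ∈ A i}) :
    ν = ν' := by
  refine ext_of_generate_finite _ generateFrom_squareCylinders.symm
    (isPiSystem_squareCylinders (fun i s hs t ht _ => hs.inter ht) fun i => MeasurableSet.univ)
    ?_ (by simp)
  rintro S ⟨s, t, ht, rfl⟩
  have hst : (s : Set ℕ).pi t = {x : ℕ → α | ∀ i ∈ s, x i ∈ t i} := by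
    ext x; simp [Set.mem_pi]
  rw [hst]
  exact h s t fun i => ht i (Set.mem_univ i)

lemma cyl_meas {α : Type*} [MeasurableSpace α] (s : Finset ℕ) {A : ℕ → Set α}
    (hA : ∀ i, MeasurableSet (A i)) : MeasurableSet {x : ℕ → α | ∀ i ∈ s, x i ∈ A i} := by
  have hst : {x : ℕ → α | ∀ i ∈ s, x i ∈ A i} = (s : Set ℕ).pi A := by
    ext x; simp [Set.mem_pi]
  rw [hst]
  exact MeasurableSet.pi (Set.to_countable _) fun i _ => hA i

lemma exists_subdiv {t : ℝ} (ht0 : 0 ≤ t) (ht1 : t ≤ 1) {K : ℕ} (hK : 0 < K) :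
    ∃ k < K, (k : ℝ)/K ≤ t ∧ t ≤ ((k : ℝ)+1)/K := by
  have hKr : (0:ℝ) < K := Nat.cast_pos.mpr hK
  rcases lt_or_eq_of_le ht1 with h1 | h1
  · refine ⟨⌊t * K⌋₊, ?_, ?_, ?_⟩
    · exact Nat.floor_lt (by positivity) |>.mpr (by nlinarith)
    · rw [div_le_iff₀ hKr]; exact Nat.floor_le (by positivity)
    · rw [le_div_iff₀ hKr]; exact (Nat.lt_floor_add_one (t * K)).le
  · subst h1
    have hc : ((K - 1 : ℕ) : ℝ) = (K : ℝ) - 1 := by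
      rw [Nat.cast_sub hK]; norm_num
    refine ⟨K - 1, Nat.sub_lt hK one_pos, ?_, ?_⟩
    · rw [div_le_one hKr, hc]; linarith
    · rw [le_div_iff₀ hKr, one_mul, hc]; linarith

lemma diag_null (νY : Measure (ℕ → unitInterval)) [IsProbabilityMeasure νY]
    (hνY : ∀ (s : Finset ℕ) (A : ℕ → Set ℝ), (∀ i, MeasurableSet (A i)) →
      νY {y : ℕ → unitInterval | ∀ i ∈ s, (y i : ℝ) ∈ A i} =
        ∏ i ∈ s, volume (A i ∩ Set.Icc (0:ℝ) 1))
    {m n : ℕ} (hmn : m ≠ n) : νY {y : ℕ → unitInterval | y m = y n} = 0 := by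
  by_contra h0
  obtain ⟨K, hK⟩ := ENNReal.exists_inv_nat_lt h0
  have hKpos : 0 < K := by
    rcases Nat.eq_zero_or_pos K with h | h
    · exfalso
      rw [h] at hK
      simp only [Nat.cast_zero, ENNReal.inv_zero] at hK
      exact (hK.trans_le prob_le_one).ne_top rfl
    · exact h
  have hKr : (0:ℝ) < (K:ℝ) := Nat.cast_pos.mpr hKpos
  have hbound : νY {y : ℕ → unitInterval | y m = y n} ≤ (K : ℝ≥0∞)⁻¹ := by
    have hcover : {y : ℕ → unitInterval | y m = y n} ⊆
        ⋃ k ∈ Finset.range K, {y : ℕ → unitInterval | ∀ i ∈ ({m, n} : Finset ℕ),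
          (y i : ℝ) ∈ Set.Icc ((k:ℝ)/K) (((k:ℝ)+1)/K)} := by
      intro y hy
      obtain ⟨k, hk, hk1, hk2⟩ := exists_subdiv (y m).2.1 (y m).2.2 hKpos
      refine Set.mem_biUnion (Finset.mem_range.mpr hk) ?_
      intro i hi
      have hyi : (y i : ℝ) = (y m : ℝ) := by
        rcases Finset.mem_insert.mp hi with h | h
        · rw [h]
        · rw [Finset.mem_singleton.mp h, ← hy]
      rw [hyi]; exact ⟨hk1, hk2⟩
    have hval : ∀ k ∈ Finset.range K, νY {y : ℕ → unitInterval | ∀ i ∈ ({m, n} : Finset ℕ),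
        (y i : ℝ) ∈ Set.Icc ((k:ℝ)/K) (((k:ℝ)+1)/K)} = (K : ℝ≥0∞)⁻¹ * (K : ℝ≥0∞)⁻¹ := by
      intro k hk
      rw [hνY ({m, n} : Finset ℕ) (fun _ => Set.Icc ((k:ℝ)/K) (((k:ℝ)+1)/K))
        (fun _ => measurableSet_Icc)]
      have hsub : Set.Icc ((k:ℝ)/K) (((k:ℝ)+1)/K) ∩ Set.Icc (0:ℝ) 1
          = Set.Icc ((k:ℝ)/K) (((k:ℝ)+1)/K) := by
        rw [Set.inter_eq_left]
        intro t ht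
        have hkK : (k:ℝ) + 1 ≤ K := by
          have := Finset.mem_range.mp hk
          exact_mod_cast Nat.succ_le_of_lt this
        constructor
        · exact le_trans (by positivity) ht.1
        · exact ht.2.trans (by rw [div_le_one hKr]; linarith)
      rw [hsub, Real.volume_Icc]
      have harith : ((k:ℝ)+1)/K - (k:ℝ)/K = ((K:ℝ))⁻¹ := by field_simp; ring
      rw [harith, ENNReal.ofReal_inv_of_pos hKr, ENNReal.ofReal_natCast,
        Finset.prod_const, Finset.card_pair hmn, sq]
    calc νY {y : ℕ → unitInterval | y m = y n}
        ≤ ∑ k ∈ Finset.range K, νY {y : ℕ → unitInterval | ∀ i ∈ ({m, n} : Finset ℕ),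
            (y i : ℝ) ∈ Set.Icc ((k:ℝ)/K) (((k:ℝ)+1)/K)} :=
          (measure_mono hcover).trans (measure_biUnion_finset_le _ _)
      _ = ∑ k ∈ Finset.range K, (K : ℝ≥0∞)⁻¹ * (K : ℝ≥0∞)⁻¹ := Finset.sum_congr rfl hval
      _ = (K : ℝ≥0∞)⁻¹ := by
          rw [Finset.sum_const, Finset.card_range, nsmul_eq_mul, ← mul_assoc,
            ENNReal.mul_inv_cancel (by exact_mod_cast hKpos.ne') (ENNReal.natCast_ne_top K),
            one_mul]
  exact hK.not_ge hbound

end Aux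

/-- The action of `S_∞` on `K ^ ℕ` by permuting coordinates, `σ · (gₙ) = (g_{σ⁻¹ n})`. -/
def permAct (K : Type*) [Group K] : Equiv.Perm ℕ →* MulAut (ℕ → K) where
  toFun σ :=
    { toFun := fun g n => g (σ⁻¹ n)
      invFun := fun g n => g (σ n)
      left_inv := fun g => by ext n; simp
      right_inv := fun g => by ext n; simp
      map_mul' := fun g h => rfl }
  map_one' := by ext g n; simp
  map_mul' := fun σ τ => by ext g n; simp [mul_inv_rev]

/-- The action of `S_∞ ⋉ K ^ ℕ` on `X ^ ℕ × [0,1] ^ ℕ` given by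
`(σ, (gₙ)) · ((xₙ), (yₙ)) = ((gₙ · x_{σ⁻¹ n}), (y_{σ⁻¹ n}))`. -/
def sdAct {K X : Type*} [Group K] [MulAction K X]
    (p : (ℕ → K) ⋊[permAct K] Equiv.Perm ℕ)
    (z : (ℕ → X) × (ℕ → unitInterval)) : (ℕ → X) × (ℕ → unitInterval) :=
  (fun n => p.left n • z.1 (p.right⁻¹ n), fun n => z.2 (p.right⁻¹ n))

/-- Let `K` be a Polish locally compact group acting freely, in a Borel
way, on a standard Borel space `X`, preserving a Borel probability measure `μ`, and let
`λ` be Lebesgue measure on `[0,1]`.  The action of `S_∞ ⋉ K^ℕ` on `X^ℕ × [0,1]^ℕ`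
defined by `(σ,(gₙ))·((xₙ),(yₙ)) = ((gₙ·x_{σ⁻¹ n}), (y_{σ⁻¹ n}))` is a Borel action
preserving the product measure `μ^ℕ × λ^ℕ`, and its free part has full measure. -/
theorem stmt4 {K X : Type*} [Group K] [TopologicalSpace K] [IsTopologicalGroup K]
    [PolishSpace K] [LocallyCompactSpace K] [MeasurableSpace K] [BorelSpace K]
    [MeasurableSpace X] [StandardBorelSpace X] [MulAction K X]
    (hmeas : Measurable (fun p : K × X => p.1 • p.2))
    (hfree : ∀ k : K, k ≠ 1 → ∀ x : X, k • x ≠ x)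
    (μ : Measure X) [IsProbabilityMeasure μ]
    (hinv : ∀ k : K, MeasurePreserving (fun x => k • x) μ μ)
    (νX : Measure (ℕ → X)) [IsProbabilityMeasure νX]
    (hνX : ∀ (s : Finset ℕ) (A : ℕ → Set X), (∀ i, MeasurableSet (A i)) →
      νX {x : ℕ → X | ∀ i ∈ s, x i ∈ A i} = ∏ i ∈ s, μ (A i))
    (νY : Measure (ℕ → unitInterval)) [IsProbabilityMeasure νY]
    (hνY : ∀ (s : Finset ℕ) (A : ℕ → Set ℝ), (∀ i, MeasurableSet (A i)) →
      νY {y : ℕ → unitInterval | ∀ i ∈ s, (y i : ℝ) ∈ A i} =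
        ∏ i ∈ s, volume (A i ∩ Set.Icc (0:ℝ) 1)) :
    letI : MeasurableSpace (Equiv.Perm ℕ) :=
      MeasurableSpace.comap (fun σ : Equiv.Perm ℕ => (σ : ℕ → ℕ)) inferInstance
    letI : MeasurableSpace ((ℕ → K) ⋊[permAct K] Equiv.Perm ℕ) :=
      MeasurableSpace.comap
        (fun p : (ℕ → K) ⋊[permAct K] Equiv.Perm ℕ => (p.left, p.right)) inferInstance
    (∀ z, sdAct (K := K) (X := X) 1 z = z) ∧
    (∀ p q z, sdAct (K := K) (X := X) (p * q) z = sdAct p (sdAct q z)) ∧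
    Measurable (fun pz : ((ℕ → K) ⋊[permAct K] Equiv.Perm ℕ) ×
        ((ℕ → X) × (ℕ → unitInterval)) => sdAct pz.1 pz.2) ∧
    (∀ p, MeasurePreserving (sdAct (K := K) (X := X) p) (νX.prod νY) (νX.prod νY)) ∧
    (νX.prod νY) {z : (ℕ → X) × (ℕ → unitInterval) |
        ∀ p : (ℕ → K) ⋊[permAct K] Equiv.Perm ℕ, p ≠ 1 → sdAct p z ≠ z} = 1 := by
  
  letI mPerm : MeasurableSpace (Equiv.Perm ℕ) :=
    MeasurableSpace.comap (fun σ : Equiv.Perm ℕ => (σ : ℕ → ℕ)) inferInstance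
  letI mSD : MeasurableSpace ((ℕ → K) ⋊[permAct K] Equiv.Perm ℕ) :=
    MeasurableSpace.comap
      (fun p : (ℕ → K) ⋊[permAct K] Equiv.Perm ℕ => (p.left, p.right)) inferInstance
  classical
  constructor
  · -- identity
    intro z
    refine Prod.ext ?_ ?_
    · funext n; exact one_smul K (z.1 n)
    · rfl
  constructor
  · -- compatibility
    intro p q z
    refine Prod.ext ?_ ?_
    · funext n; exact mul_smul _ _ _
    · rfl
  constructor
  · -- measurability
    have hproj : Measurable (fun p : (ℕ → K) ⋊[permAct K] Equiv.Perm ℕ => (p.left, p.right)) :=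
      Measurable.of_comap_le le_rfl
    have hsinv : ∀ n : ℕ, Measurable fun σ : Equiv.Perm ℕ => σ⁻¹ n := by
      intro n
      apply measurable_to_countable'
      intro m
      refine MeasurableSpace.measurableSet_comap.mpr
        ⟨(fun u : ℕ → ℕ => u m) ⁻¹' {n},
          measurable_pi_apply (X := fun _ : ℕ => ℕ) m (measurableSet_singleton n), ?_⟩
      ext σ
      simp only [Set.mem_preimage, Set.mem_setOf_eq, Set.mem_singleton_iff]
      constructor
      · rintro rfl; simp
      · rintro rfl; simp
    have hrinvn : ∀ n : ℕ, Measurable fun pz :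
        ((ℕ → K) ⋊[permAct K] Equiv.Perm ℕ) × ((ℕ → X) × (ℕ → unitInterval)) =>
        pz.1.right⁻¹ n :=
      fun n => ((hsinv n).comp (measurable_snd.comp hproj)).comp measurable_fst
    refine Measurable.prodMk ?_ ?_
    · apply measurable_pi_lambda
      intro n
      have h1 : Measurable fun pz :
          ((ℕ → K) ⋊[permAct K] Equiv.Perm ℕ) × ((ℕ → X) × (ℕ → unitInterval)) =>
          pz.1.left n :=
        ((measurable_pi_apply n).comp (measurable_fst.comp hproj)).comp measurable_fst
      have h2 : Measurable fun pz :
          ((ℕ → K) ⋊[permAct K] Equiv.Perm ℕ) × ((ℕ → X) × (ℕ → unitInterval)) =>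
          pz.2.1 (pz.1.right⁻¹ n) := by
        have hpair : Measurable fun pz :
            ((ℕ → K) ⋊[permAct K] Equiv.Perm ℕ) × ((ℕ → X) × (ℕ → unitInterval)) =>
            (pz.2.1, pz.1.right⁻¹ n) :=
          (measurable_fst.comp measurable_snd).prodMk (hrinvn n)
        have heval : Measurable fun q : (ℕ → X) × ℕ => q.1 q.2 :=
          measurable_from_prod_countable_left fun k => measurable_pi_apply k
        exact heval.comp hpair
      exact hmeas.comp (h1.prodMk h2)
    · apply measurable_pi_lambda
      intro n
      have hpair : Measurable fun pz :
          ((ℕ → K) ⋊[permAct K] Equiv.Perm ℕ) × ((ℕ → X) × (ℕ → unitInterval)) =>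
          (pz.2.2, pz.1.right⁻¹ n) :=
        (measurable_snd.comp measurable_snd).prodMk (hrinvn n)
      have heval : Measurable fun q : (ℕ → unitInterval) × ℕ => q.1 q.2 :=
        measurable_from_prod_countable_left fun k => measurable_pi_apply k
      exact heval.comp hpair
  constructor
  · -- measure preserving
    intro p
    set σ := p.right with hσdef
    -- first factor
    have hT1 : Measurable fun x : ℕ → X => (fun n => p.left n • x (σ⁻¹ n)) :=
      measurable_pi_lambda _ fun n =>
        ((hinv (p.left n)).measurable).comp (measurable_pi_apply (σ⁻¹ n))
    have hmp1 : MeasurePreserving (fun x : ℕ → X => (fun n => p.left n • x (σ⁻¹ n))) νX νX := by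
      refine ⟨hT1, ?_⟩
      have : IsProbabilityMeasure (νX.map (fun x : ℕ → X => (fun n => p.left n • x (σ⁻¹ n)))) :=
        Measure.isProbabilityMeasure_map hT1.aemeasurable
      refine ext_cylinders fun s A hA => ?_
      rw [Measure.map_apply hT1 (cyl_meas s hA)]
      have hpre : (fun x : ℕ → X => (fun n => p.left n • x (σ⁻¹ n))) ⁻¹'
          {x : ℕ → X | ∀ i ∈ s, x i ∈ A i}
          = {x : ℕ → X | ∀ j ∈ s.image (fun i => σ⁻¹ i),
              x j ∈ (fun v => p.left (σ j) • v) ⁻¹' A (σ j)} := by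
        ext x
        simp only [Set.mem_preimage, Set.mem_setOf_eq, Finset.mem_image]
        constructor
        · rintro h j ⟨i, hi, rfl⟩
          simpa using h i hi
        · intro h i hi
          simpa using h (σ⁻¹ i) ⟨i, hi, rfl⟩
      rw [hpre, hνX _ _ (fun j => (hinv (p.left (σ j))).measurable (hA (σ j))),
        Finset.prod_image (fun a _ b _ hab => (Equiv.injective σ⁻¹) hab),
        hνX s A hA]
      refine Finset.prod_congr rfl fun i _ => ?_
      rw [show σ (σ⁻¹ i) = i from σ.apply_symm_apply i]
      exact (hinv (p.left i)).measure_preimage (hA i).nullMeasurableSet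
    -- second factor
    have hT2 : Measurable fun y : ℕ → unitInterval => (fun n => y (σ⁻¹ n)) :=
      measurable_pi_lambda _ fun n => measurable_pi_apply (σ⁻¹ n)
    have hmp2 : MeasurePreserving (fun y : ℕ → unitInterval => (fun n => y (σ⁻¹ n))) νY νY := by
      refine ⟨hT2, ?_⟩
      have : IsProbabilityMeasure (νY.map (fun y : ℕ → unitInterval => (fun n => y (σ⁻¹ n)))) :=
        Measure.isProbabilityMeasure_map hT2.aemeasurable
      refine ext_cylinders fun s A' hA' => ?_
      choose B hBmeas hBeq using fun i => MeasurableSpace.measurableSet_comap.mp (hA' i)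
      have hA'B : ∀ i, A' i = Subtype.val ⁻¹' B i := fun i => (hBeq i).symm
      rw [Measure.map_apply hT2 (cyl_meas s hA')]
      have hpre : (fun y : ℕ → unitInterval => (fun n => y (σ⁻¹ n))) ⁻¹'
          {y : ℕ → unitInterval | ∀ i ∈ s, y i ∈ A' i}
          = {y : ℕ → unitInterval | ∀ j ∈ s.image (fun i => σ⁻¹ i), (y j : ℝ) ∈ B (σ j)} := by
        ext y
        simp only [Set.mem_preimage, Set.mem_setOf_eq, Finset.mem_image, hA'B]
        constructor
        · rintro h j ⟨i, hi, rfl⟩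
          simpa using h i hi
        · intro h i hi
          simpa using h (σ⁻¹ i) ⟨i, hi, rfl⟩
      have hcylB : {y : ℕ → unitInterval | ∀ i ∈ s, y i ∈ A' i}
          = {y : ℕ → unitInterval | ∀ i ∈ s, (y i : ℝ) ∈ B i} := by
        ext y
        simp only [Set.mem_setOf_eq, hA'B, Set.mem_preimage]
      rw [hpre, hνY _ _ (fun j => hBmeas (σ j)),
        Finset.prod_image (fun a _ b _ hab => (Equiv.injective σ⁻¹) hab),
        hcylB, hνY s B hBmeas]
      refine Finset.prod_congr rfl fun i _ => ?_
      rw [show σ (σ⁻¹ i) = i from σ.apply_symm_apply i]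
    have hdecomp : sdAct (K := K) (X := X) p
        = Prod.map (fun x : ℕ → X => (fun n => p.left n • x (σ⁻¹ n)))
            (fun y : ℕ → unitInterval => (fun n => y (σ⁻¹ n))) := rfl
    rw [hdecomp]
    exact hmp1.prod hmp2
  · -- free part has full measure
    have hN : (νX.prod νY) {z : (ℕ → X) × (ℕ → unitInterval) |
        ∀ p : (ℕ → K) ⋊[permAct K] Equiv.Perm ℕ, p ≠ 1 → sdAct p z ≠ z}ᶜ = 0 := by
      have hsub : {z : (ℕ → X) × (ℕ → unitInterval) |
          ∀ p : (ℕ → K) ⋊[permAct K] Equiv.Perm ℕ, p ≠ 1 → sdAct p z ≠ z}ᶜ ⊆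
          ⋃ q : ℕ × ℕ, {z : (ℕ → X) × (ℕ → unitInterval) | q.1 ≠ q.2 ∧ z.2 q.1 = z.2 q.2} := by
        intro z hz
        simp only [Set.mem_compl_iff, Set.mem_setOf_eq, not_forall, Classical.not_imp, not_not] at hz
        obtain ⟨p, hp1, hfix⟩ := hz
        have h1 : ∀ n, p.left n • z.1 (p.right⁻¹ n) = z.1 n :=
          fun n => congrFun (congrArg Prod.fst hfix) n
        have h2 : ∀ n, z.2 (p.right⁻¹ n) = z.2 n :=
          fun n => congrFun (congrArg Prod.snd hfix) n
        by_cases hσ : p.right = 1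
        · exfalso
          have hl : p.left ≠ 1 := by
            intro h
            exact hp1 (SemidirectProduct.ext h hσ)
          obtain ⟨n, hn⟩ := Function.ne_iff.mp hl
          have hfx := h1 n
          rw [hσ] at hfx
          simp only [inv_one, Equiv.Perm.one_apply] at hfx
          exact hfree _ hn _ hfx
        · obtain ⟨n, hn⟩ : ∃ n, p.right⁻¹ n ≠ n := by
            by_contra h
            push_neg at h
            refine hσ (Equiv.ext fun n => ?_)
            have := h (p.right n)
            rw [show p.right⁻¹ (p.right n) = n from p.right.symm_apply_apply n] at this
            simpa using this.symm
          exact Set.mem_iUnion.mpr ⟨(p.right⁻¹ n, n), hn, h2 n⟩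
      have hterm : ∀ q : ℕ × ℕ, (νX.prod νY)
          {z : (ℕ → X) × (ℕ → unitInterval) | q.1 ≠ q.2 ∧ z.2 q.1 = z.2 q.2} = 0 := by
        rintro ⟨m, n⟩
        by_cases hmn : m = n
        · simp [hmn]
        · have heq : {z : (ℕ → X) × (ℕ → unitInterval) | m ≠ n ∧ z.2 m = z.2 n}
              = Set.univ ×ˢ {y : ℕ → unitInterval | y m = y n} := by
            ext z
            simp [hmn]
          rw [heq, Measure.prod_prod, diag_null νY hνY hmn, mul_zero]
      refine le_antisymm ?_ zero_le
      calc (νX.prod νY) _ ≤ ∑' q : ℕ × ℕ, (νX.prod νY)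
            {z : (ℕ → X) × (ℕ → unitInterval) | q.1 ≠ q.2 ∧ z.2 q.1 = z.2 q.2} :=
            (measure_mono hsub).trans (measure_iUnion_le _)
        _ = 0 := by simp [hterm]
    refine le_antisymm prob_le_one ?_
    calc (1:ENNReal) = (νX.prod νY) Set.univ := measure_univ.symm
      _ ≤ (νX.prod νY) {z : (ℕ → X) × (ℕ → unitInterval) |
            ∀ p : (ℕ → K) ⋊[permAct K] Equiv.Perm ℕ, p ≠ 1 → sdAct p z ≠ z}
          + (νX.prod νY) {z : (ℕ → X) × (ℕ → unitInterval) |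
            ∀ p : (ℕ → K) ⋊[permAct K] Equiv.Perm ℕ, p ≠ 1 → sdAct p z ≠ z}ᶜ := by
          rw [← Set.union_compl_self {z : (ℕ → X) × (ℕ → unitInterval) |
            ∀ p : (ℕ → K) ⋊[permAct K] Equiv.Perm ℕ, p ≠ 1 → sdAct p z ≠ z}]
          exact measure_union_le _ _
      _ = _ := by rw [hN, add_zero]
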